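/- Let e be a Demazure root of a full-dimensional rational polyhedral cone σ ⊆ N⊗ℚ with distinguished ray ρ. Then the derivation ∂_e of K[σ^∨ ∩ M], given by ∂_e(χ^m) = ⟨p_ρ, m⟩ χ^{m+e}, is locally nilpotent. -/

import Mathlib

/-- The standard pairing between the lattice `N = ℤ^n` and its dual `M = ℤ^n`. -/
def dotp {n : ℕ} (p e : Fin n → ℤ) : ℤ := ∑ k, p k * e k

/-- The additive monoid `σ^∨ ∩ M` of lattice points of the dual cone of the cone `σ`
generated by the (primitive generators of its) rays `p 0, …, p (m-1)`. -/
def dualConeM {n m : ℕ} (p : Fin m → Fin n → ℤ) : AddSubmonoid (Fin n → ℤ) where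
  carrier := {v | ∀ k, 0 ≤ dotp (p k) v}
  zero_mem' := by
    intro k
    simp [dotp]
  add_mem' := by
    intro a b ha hb k
    have : dotp (p k) (a + b) = dotp (p k) a + dotp (p k) b := by
      simp [dotp, mul_add, Finset.sum_add_distrib]
    rw [this]
    exact add_nonneg (ha k) (hb k)

lemma dotp_add {n : ℕ} (p a b : Fin n → ℤ) :
    dotp p (a + b) = dotp p a + dotp p b := by
  simp [dotp, mul_add, Finset.sum_add_distrib]

/-- Let `e` be a Demazure root of a full-dimensional rational polyhedral
cone `σ` with distinguished ray `ρ`.  Any `K`-linear map `D` of `K[σ^∨ ∩ M]` satisfying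
`D(χ^m) = ⟨p_ρ, m⟩ χ^{m+e}` on monomials is locally nilpotent. -/
theorem stmt_6 (K : Type*) [Field K] [CharZero K] (n m : ℕ)
    (p : Fin m → Fin n → ℤ) (ρ : Fin m) (e : Fin n → ℤ)
    (he : dotp (p ρ) e = -1) (he' : ∀ k, k ≠ ρ → 0 ≤ dotp (p k) e)
    (D : AddMonoidAlgebra K (dualConeM p) →ₗ[K] AddMonoidAlgebra K (dualConeM p))
    (hD : ∀ (v : Fin n → ℤ) (hv : v ∈ dualConeM p),
      (dotp (p ρ) v = 0 →
        D (AddMonoidAlgebra.single (⟨v, hv⟩ : dualConeM p) (1 : K)) = 0) ∧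
      ∀ hve : v + e ∈ dualConeM p,
        D (AddMonoidAlgebra.single (⟨v, hv⟩ : dualConeM p) (1 : K)) =
          (dotp (p ρ) v : K) •
            AddMonoidAlgebra.single (⟨v + e, hve⟩ : dualConeM p) (1 : K)) :
    ∀ f : AddMonoidAlgebra K (dualConeM p), ∃ k : ℕ, (D ^ k) f = 0 := by
  -- key lemma on monomials
  have key : ∀ d : ℕ, ∀ (v : Fin n → ℤ) (hv : v ∈ dualConeM p),
      (dotp (p ρ) v).toNat = d →
      (D ^ (d + 1)) (AddMonoidAlgebra.single (⟨v, hv⟩ : dualConeM p) (1 : K)) = 0 := by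
    intro d
    induction d with
    | zero =>
      intro v hv hd
      have hnn : 0 ≤ dotp (p ρ) v := hv ρ
      have h0 : dotp (p ρ) v = 0 := by omega
      have := (hD v hv).1 h0
      simpa [pow_one] using this
    | succ d ih =>
      intro v hv hd
      have hnn : 0 ≤ dotp (p ρ) v := hv ρ
      have hval : dotp (p ρ) v = (d : ℤ) + 1 := by omega
      have hve : v + e ∈ dualConeM p := by
        intro k
        rw [dotp_add]
        by_cases hk : k = ρ
        · subst hk; rw [hval, he]; omega
        · exact add_nonneg (hv k) (he' k hk)
      have hDv := (hD v hv).2 hve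
      have hd' : (dotp (p ρ) (v + e)).toNat = d := by
        rw [dotp_add, hval, he]; omega
      have hrec := ih (v + e) hve hd'
      rw [pow_succ]
      show (D ^ (d + 1)) (D (AddMonoidAlgebra.single (⟨v, hv⟩ : dualConeM p) (1 : K))) = 0
      rw [hDv, map_smul, hrec, smul_zero]
  -- monotonicity
  have mono : ∀ (k j : ℕ) (x : AddMonoidAlgebra K (dualConeM p)),
      (D ^ k) x = 0 → (D ^ (k + j)) x = 0 := by
    intro k j x hx
    rw [add_comm, pow_add]
    show (D ^ j) ((D ^ k) x) = 0
    rw [hx, map_zero]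
  intro f
  induction f using AddMonoidAlgebra.induction with
  | zero => exact ⟨0, by simp⟩
  | single_add a b f ha hb ihf =>
    obtain ⟨k2, hk2⟩ := ihf
    refine ⟨((dotp (p ρ) a.1).toNat + 1) + k2, ?_⟩
    rw [map_add]
    have h1 : (D ^ (((dotp (p ρ) a.1).toNat + 1) + k2)) (AddMonoidAlgebra.single a b) = 0 := by
      have : (AddMonoidAlgebra.single a b : AddMonoidAlgebra K (dualConeM p))
          = b • AddMonoidAlgebra.single a (1 : K) := by
        simp [AddMonoidAlgebra.smul_single]
      rw [this, map_smul]
      have := key (dotp (p ρ) a.1).toNat a.1 a.2 rfl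
      have h0 : (D ^ ((dotp (p ρ) a.1).toNat + 1))
          (AddMonoidAlgebra.single (a : dualConeM p) (1 : K)) = 0 := by
        simpa using this
      rw [mono _ _ _ h0, smul_zero]
    have h2 : (D ^ (((dotp (p ρ) a.1).toNat + 1) + k2)) f = 0 := by
      rw [add_comm]
      exact mono _ _ _ hk2
    rw [h1, h2, add_zero]
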